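/- Let U, V, W be real Hilbert spaces and let d1 : U → V and d2 : V → W be bounded linear maps such that d1 is injective, the range of d1 equals the kernel of d2, and the range of d2 is closed in W. Let J_V : V → V' be the Riesz map, J_V(v) = ⟨v, ·⟩_V, and let d2' : W' → V' be the Banach dual map of d2. Then V' admits the Helmholtz decomposition V' = range(d2') ⊕ J_V(d1(U)): every f ∈ V' can be written uniquely as f = g + J_V(d1(u)) with g ∈ range(d2') and u ∈ U, and the decomposition is orthogonal in the sense that ⟨J_V⁻¹(g), d1(u)⟩_V = 0. -/

import Mathlib

open InnerProductSpace

/-- A continuous functional vanishing on the kernel of a closed-range operator between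
Hilbert spaces factors through the operator. -/
lemma factors_through_of_vanishing_on_ker {V W : Type*}
    [NormedAddCommGroup V] [InnerProductSpace ℝ V] [CompleteSpace V]
    [NormedAddCommGroup W] [InnerProductSpace ℝ W] [CompleteSpace W]
    (d2 : V →L[ℝ] W) (hclosed : IsClosed (LinearMap.range (d2 : V →ₗ[ℝ] W) : Set W))
    (f' : V →L[ℝ] ℝ) (hf : ∀ x ∈ LinearMap.ker (d2 : V →ₗ[ℝ] W), f' x = 0) :
    ∃ g : W →L[ℝ] ℝ, g.comp d2 = f' := by
  set K : Submodule ℝ V := LinearMap.ker (d2 : V →ₗ[ℝ] W) with hKdef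
  haveI : CompleteSpace K := (ContinuousLinearMap.isClosed_ker d2).completeSpace_coe
  set R : Submodule ℝ W := LinearMap.range (d2 : V →ₗ[ℝ] W) with hRdef
  haveI : CompleteSpace R := hclosed.completeSpace_coe
  set T : (Kᗮ : Submodule ℝ V) →L[ℝ] R :=
    (d2.comp Kᗮ.subtypeL).codRestrict R (fun x => LinearMap.mem_range_self _ _) with hTdef
  have hTapp : ∀ x : Kᗮ, (T x : W) = d2 (x : V) := fun x => rfl
  have hker : LinearMap.ker (T : Kᗮ →ₗ[ℝ] R) = ⊥ := by
    rw [LinearMap.ker_eq_bot']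
    intro x hx
    have hxK : (x : V) ∈ K := by
      have : (T x : W) = 0 := by exact congrArg Subtype.val hx
      simpa [hTapp, hKdef, LinearMap.mem_ker] using this
    have : (x : V) = 0 := by
      have := (Submodule.orthogonal_disjoint K).le_bot ⟨hxK, x.2⟩
      simpa using this
    exact Subtype.ext this
  have hrange : LinearMap.range (T : Kᗮ →ₗ[ℝ] R) = ⊤ := by
    rw [LinearMap.range_eq_top]
    rintro ⟨w, hw⟩
    obtain ⟨v, hv⟩ := hw
    refine ⟨⟨v - K.orthogonalProjection v, Submodule.sub_starProjection_mem_orthogonal v⟩, ?_⟩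
    apply Subtype.ext
    have hPv : d2 (K.starProjection v) = 0 := (K.orthogonalProjection v).2
    rw [ContinuousLinearMap.coe_coe] at hv
    simp [hTapp, map_sub, hPv, hv]
  set E := ContinuousLinearEquiv.ofBijective T hker hrange with hEdef
  refine ⟨f'.comp (Kᗮ.subtypeL.comp ((E.symm : R →L[ℝ] Kᗮ).comp R.orthogonalProjection)), ?_⟩
  ext x
  have hxR : d2 x ∈ R := LinearMap.mem_range_self _ _
  have hproj : R.orthogonalProjection (d2 x) = ⟨d2 x, hxR⟩ :=
    Submodule.orthogonalProjectionOnto_mem_subspace_eq_self (⟨d2 x, hxR⟩ : R)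
  set y : Kᗮ := E.symm ⟨d2 x, hxR⟩ with hydef
  have hEy : (T y : W) = d2 x := by
    have := E.apply_symm_apply ⟨d2 x, hxR⟩
    rw [hydef]
    rw [show (T (E.symm ⟨d2 x, hxR⟩) : R) = E (E.symm ⟨d2 x, hxR⟩) from rfl, this]
  have hdiff : x - (y : V) ∈ K := by
    simp only [hKdef, LinearMap.mem_ker, map_sub, ContinuousLinearMap.coe_coe]
    rw [← hTapp, hEy, sub_self]
  have : f' x - f' (y : V) = 0 := by rw [← map_sub]; exact hf _ hdiff
  simp only [ContinuousLinearMap.comp_apply, hproj, ContinuousLinearEquiv.coe_coe,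
    Submodule.subtypeL_apply]
  rw [← hydef]
  linarith

theorem dual_helmholtz_decomposition {U V W : Type*}
    [NormedAddCommGroup U] [InnerProductSpace ℝ U] [CompleteSpace U]
    [NormedAddCommGroup V] [InnerProductSpace ℝ V] [CompleteSpace V]
    [NormedAddCommGroup W] [InnerProductSpace ℝ W] [CompleteSpace W]
    (d1 : U →L[ℝ] V) (d2 : V →L[ℝ] W)
    (hinj : Function.Injective d1)
    (hex : LinearMap.range (d1 : U →ₗ[ℝ] V) = LinearMap.ker (d2 : V →ₗ[ℝ] W))
    (hclosed : IsClosed (LinearMap.range (d2 : V →ₗ[ℝ] W) : Set W)) :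
    ∀ f : StrongDual ℝ V, ∃! p : StrongDual ℝ V × U,
      (∃ g : StrongDual ℝ W, g.comp d2 = p.1) ∧
      f = p.1 + InnerProductSpace.toDual ℝ V (d1 p.2) ∧
      (inner ℝ ((InnerProductSpace.toDual ℝ V).symm p.1) (d1 p.2) : ℝ) = 0 := by
  intro f
  set K : Submodule ℝ V := LinearMap.ker (d2 : V →ₗ[ℝ] W) with hKdef
  haveI : CompleteSpace K := (ContinuousLinearMap.isClosed_ker d2).completeSpace_coe
  set v : V := (InnerProductSpace.toDual ℝ V).symm f with hvdef
  set v₂ : V := (K.orthogonalProjection v : V) with hv₂def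
  have hv₂K : v₂ ∈ K := (K.orthogonalProjection v).2
  obtain ⟨u, hu⟩ : ∃ u, d1 u = v₂ := by
    have : v₂ ∈ LinearMap.range (d1 : U →ₗ[ℝ] V) := hex ▸ hv₂K
    exact this
  set v₁ : V := v - v₂ with hv₁def
  have hv₁ : v₁ ∈ Kᗮ := Submodule.sub_starProjection_mem_orthogonal v
  refine ⟨(InnerProductSpace.toDual ℝ V v₁, u), ⟨?_, ?_, ?_⟩, ?_⟩
  · apply factors_through_of_vanishing_on_ker d2 hclosed
    intro x hx
    have : (inner ℝ x v₁ : ℝ) = 0 := hv₁ x hx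
    rw [toDual_apply_apply]
    rw [real_inner_comm] at this
    exact this
  · have : v = v₁ + v₂ := (sub_add_cancel v v₂).symm
    simp only [hu]
    calc f = InnerProductSpace.toDual ℝ V v := ((InnerProductSpace.toDual ℝ V).apply_symm_apply f).symm
    _ = InnerProductSpace.toDual ℝ V v₁ + InnerProductSpace.toDual ℝ V v₂ := by
        rw [this, map_add]
  · simp only [LinearIsometryEquiv.symm_apply_apply, hu]
    rw [real_inner_comm]
    exact hv₁ v₂ hv₂K
  · rintro ⟨f₁, u'⟩ ⟨⟨g, hg⟩, hsum, _⟩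
    set w : V := (InnerProductSpace.toDual ℝ V).symm f₁ with hwdef
    have hw : w ∈ Kᗮ := by
      intro x hx
      have hx0 : d2 x = 0 := hx
      have hg' : ContinuousLinearMap.comp g d2 = f₁ := hg
      have : f₁ x = 0 := by rw [← hg']; simp [hx0]
      have hwx : (inner ℝ w x : ℝ) = 0 := by
        rw [← toDual_apply_apply, (InnerProductSpace.toDual ℝ V).apply_symm_apply]; exact this
      rw [real_inner_comm]; exact hwx
    have hdu' : d1 u' ∈ K := hex ▸ LinearMap.mem_range_self _ _
    have hv : v = d1 u' + w := by
      have := congrArg (InnerProductSpace.toDual ℝ V).symm hsum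
      rw [map_add, LinearIsometryEquiv.symm_apply_apply] at this
      rw [hvdef, this, ← hwdef]; exact add_comm _ _
    have hproj : v₂ = d1 u' :=
      Submodule.eq_starProjection_of_mem_orthogonal' hdu' hw hv
    have hu' : u' = u := hinj (by rw [hu, hproj])
    have hf₁ : f₁ = InnerProductSpace.toDual ℝ V v₁ := by
      have h1 : f = f₁ + InnerProductSpace.toDual ℝ V v₂ := by rw [hsum, hproj]
      have h2 : f = InnerProductSpace.toDual ℝ V v₁ + InnerProductSpace.toDual ℝ V v₂ := by
        calc f = InnerProductSpace.toDual ℝ V v := ((InnerProductSpace.toDual ℝ V).apply_symm_apply f).symm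
        _ = _ := by rw [← map_add]; congr 1; exact (sub_add_cancel v v₂).symm
      have := h1.symm.trans h2
      exact add_right_cancel this
    exact Prod.ext hf₁ hu'
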